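/- Let 0<γ<1 and 2<α<3. For all t, s ∈ [0,1], the Caputo derivative of order γ in the first variable of the Green function G satisfies |ᶜDᵞₜG(t,s)| ≤ Γ(α)/Γ(α−γ) + 2/(Γ(2−γ)Γ(α−1)). -/

import Mathlib

open MeasureTheory Set intervalIntegral

/-- Green function `G` associated to the fractional BVP, `2 < α < 3`. -/
noncomputable def greenG (α t s : ℝ) : ℝ :=
  if s ≤ t then
    ((t - s) ^ (α - 1) + (1 - t) * (1 - s) ^ (α - 1)) / Real.Gamma α
      + (1 - t) * (1 - s) ^ (α - 2) / Real.Gamma (α - 1)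
  else
    (1 - t) * (1 - s) ^ (α - 1) / Real.Gamma α
      + (1 - t) * (1 - s) ^ (α - 2) / Real.Gamma (α - 1)

/-- Caputo fractional derivative of order `γ ∈ (0,1)`. -/
noncomputable def caputo (γ : ℝ) (u : ℝ → ℝ) (t : ℝ) : ℝ :=
  (1 / Real.Gamma (1 - γ)) * ∫ s in (0:ℝ)..t, (t - s) ^ (-γ) * deriv u s

/-- Caputo derivative of order `γ` of the Green function `G` in its first variable. -/
noncomputable def caputoG (α γ t s : ℝ) : ℝ :=
  caputo γ (fun r => greenG α r s) t

lemma real_beta (a b : ℝ) (ha : 0 < a) (hb : 0 < b) :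
    ∫ x in (0:ℝ)..1, x ^ (a - 1) * (1 - x) ^ (b - 1)
      = Real.Gamma a * Real.Gamma b / Real.Gamma (a + b) := by
  have key := Complex.Gamma_mul_Gamma_eq_betaIntegral (s := (a:ℂ)) (t := (b:ℂ))
    (by simpa using ha) (by simpa using hb)
  have hint : Complex.betaIntegral (a:ℂ) (b:ℂ)
      = ((∫ x in (0:ℝ)..1, x ^ (a - 1) * (1 - x) ^ (b - 1) : ℝ) : ℂ) := by
    rw [Complex.betaIntegral, ← intervalIntegral.integral_ofReal]
    apply intervalIntegral.integral_congr
    intro x hx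
    rw [uIcc_of_le (by norm_num : (0:ℝ) ≤ 1)] at hx
    push_cast
    rw [Complex.ofReal_cpow hx.1 (a-1),
      Complex.ofReal_cpow (by linarith [hx.2] : (0:ℝ) ≤ 1 - x) (b-1)]
    push_cast
    ring
  rw [hint, show ((a:ℂ) + b) = ((a+b:ℝ):ℂ) by push_cast; ring,
    Complex.Gamma_ofReal, Complex.Gamma_ofReal, Complex.Gamma_ofReal] at key
  have h3 : Real.Gamma a * Real.Gamma b
      = Real.Gamma (a+b) * ∫ x in (0:ℝ)..1, x ^ (a - 1) * (1 - x) ^ (b - 1) := by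
    exact_mod_cast key
  have hG : (0:ℝ) < Real.Gamma (a+b) := Real.Gamma_pos_of_pos (by linarith)
  rw [eq_div_iff hG.ne', mul_comm, ← h3]

lemma deriv_greenG (α s : ℝ) (hα1 : 2 < α) (r : ℝ) (hr : r ≠ s) :
    deriv (fun x => greenG α x s) r =
      if s < r then
        (α - 1) * (r - s) ^ (α - 2) / Real.Gamma α
          - ((1 - s) ^ (α - 1) / Real.Gamma α + (1 - s) ^ (α - 2) / Real.Gamma (α - 1))
      else
        -((1 - s) ^ (α - 1) / Real.Gamma α + (1 - s) ^ (α - 2) / Real.Gamma (α - 1)) := by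
  rcases lt_or_gt_of_ne hr with h | h
  · have hev : (fun x => greenG α x s) =ᶠ[nhds r]
        (fun x => (1 - x) * (1 - s) ^ (α - 1) / Real.Gamma α
          + (1 - x) * (1 - s) ^ (α - 2) / Real.Gamma (α - 1)) := by
      filter_upwards [Iio_mem_nhds h] with x hx
      rw [greenG, if_neg (not_le.mpr hx)]
    have hd : HasDerivAt (fun x : ℝ => (1 - x) * (1 - s) ^ (α - 1) / Real.Gamma α
          + (1 - x) * (1 - s) ^ (α - 2) / Real.Gamma (α - 1))
        ((-1) * (1 - s) ^ (α - 1) / Real.Gamma α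
          + (-1) * (1 - s) ^ (α - 2) / Real.Gamma (α - 1)) r := by
      have h0 : HasDerivAt (fun x : ℝ => 1 - x) (-1) r := by
        simpa using (hasDerivAt_id r).const_sub 1
      exact ((h0.mul_const _).div_const _).add ((h0.mul_const _).div_const _)
    rw [hev.deriv_eq, hd.deriv, if_neg (not_lt.mpr h.le)]
    ring
  · have hev : (fun x => greenG α x s) =ᶠ[nhds r]
        (fun x => ((x - s) ^ (α - 1) + (1 - x) * (1 - s) ^ (α - 1)) / Real.Gamma α
          + (1 - x) * (1 - s) ^ (α - 2) / Real.Gamma (α - 1)) := by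
      filter_upwards [Ioi_mem_nhds h] with x hx
      rw [greenG, if_pos (le_of_lt hx)]
    have h0 : HasDerivAt (fun x : ℝ => 1 - x) (-1) r := by
      simpa using (hasDerivAt_id r).const_sub 1
    have hpow : HasDerivAt (fun x : ℝ => (x - s) ^ (α - 1))
        ((α - 1) * (r - s) ^ (α - 1 - 1) * 1) r := by
      have hrs : HasDerivAt (fun x : ℝ => x - s) 1 r := (hasDerivAt_id r).sub_const s
      exact (Real.hasDerivAt_rpow_const (x := r - s) (p := α - 1)
        (Or.inr (by linarith))).comp r hrs
    have hd : HasDerivAt (fun x : ℝ => ((x - s) ^ (α - 1) + (1 - x) * (1 - s) ^ (α - 1)) / Real.Gamma α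
          + (1 - x) * (1 - s) ^ (α - 2) / Real.Gamma (α - 1))
        (((α - 1) * (r - s) ^ (α - 1 - 1) * 1 + (-1) * (1 - s) ^ (α - 1)) / Real.Gamma α
          + (-1) * (1 - s) ^ (α - 2) / Real.Gamma (α - 1)) r :=
      ((hpow.add (h0.mul_const _)).div_const _).add ((h0.mul_const _).div_const _)
    rw [hev.deriv_eq, hd.deriv, if_pos h, show α - 1 - 1 = α - 2 by ring]
    ring

set_option maxHeartbeats 1000000 in
/-- For `0 < γ < 1` and `2 < α < 3`, the Caputo derivative of order `γ` of the
Green function `G` in its first variable satisfies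
`|ᶜDᵞₜG(t,s)| ≤ Γ(α)/Γ(α−γ) + 2/(Γ(2−γ)Γ(α−1))` on the unit square. -/
theorem caputoG_bound (γ α : ℝ) (hγ1 : 0 < γ) (hγ2 : γ < 1)
    (hα1 : 2 < α) (hα2 : α < 3) :
    ∀ t ∈ Icc (0:ℝ) 1, ∀ s ∈ Icc (0:ℝ) 1,
      |caputoG α γ t s|
        ≤ Real.Gamma α / Real.Gamma (α - γ)
          + 2 / (Real.Gamma (2 - γ) * Real.Gamma (α - 1)) := by
  intro t ht s hs
  obtain ⟨ht0, ht1⟩ := ht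
  obtain ⟨hs0, hs1⟩ := hs
  have hΓα : 0 < Real.Gamma α := Real.Gamma_pos_of_pos (by linarith)
  have hΓα1 : 0 < Real.Gamma (α - 1) := Real.Gamma_pos_of_pos (by linarith)
  have hΓ1γ : 0 < Real.Gamma (1 - γ) := Real.Gamma_pos_of_pos (by linarith)
  have hΓ2γ : 0 < Real.Gamma (2 - γ) := Real.Gamma_pos_of_pos (by linarith)
  have hΓαγ : 0 < Real.Gamma (α - γ) := Real.Gamma_pos_of_pos (by linarith)
  have hG2 : Real.Gamma (2 - γ) = (1 - γ) * Real.Gamma (1 - γ) := by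
    rw [show (2 - γ) = (1 - γ) + 1 by ring, Real.Gamma_add_one (by linarith)]
  have hGα : Real.Gamma α = (α - 1) * Real.Gamma (α - 1) := by
    have h := Real.Gamma_add_one (show α - 1 ≠ 0 by linarith)
    rw [show α - 1 + 1 = α by ring] at h
    exact h
  have hΓαone : 1 ≤ Real.Gamma α := by
    have := Real.Gamma_strictMonoOn_Ici (a := 2) (by simp) (by simpa using hα1.le) hα1
    rw [Real.Gamma_two] at this
    linarith
  set K : ℝ := (1 - s) ^ (α - 1) / Real.Gamma α + (1 - s) ^ (α - 2) / Real.Gamma (α - 1)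
    with hKdef
  have hK0 : 0 ≤ K := by
    have := Real.rpow_nonneg (by linarith : (0:ℝ) ≤ 1 - s) (α - 1)
    have := Real.rpow_nonneg (by linarith : (0:ℝ) ≤ 1 - s) (α - 2)
    positivity
  have hK2 : K ≤ 2 / Real.Gamma (α - 1) := by
    have h1 : (1 - s) ^ (α - 1) ≤ 1 :=
      Real.rpow_le_one (by linarith) (by linarith) (by linarith)
    have h2 : (1 - s) ^ (α - 2) ≤ 1 :=
      Real.rpow_le_one (by linarith) (by linarith) (by linarith)
    have hle : Real.Gamma (α - 1) ≤ Real.Gamma α := by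
      rw [hGα]; nlinarith
    have e1 : (1 - s) ^ (α - 1) / Real.Gamma α ≤ 1 / Real.Gamma (α - 1) := by
      apply div_le_div₀ (by norm_num) h1 hΓα1 hle
    have e2 : (1 - s) ^ (α - 2) / Real.Gamma (α - 1) ≤ 1 / Real.Gamma (α - 1) := by
      apply div_le_div₀ (by norm_num) h2 hΓα1 le_rfl
    calc K ≤ 1 / Real.Gamma (α - 1) + 1 / Real.Gamma (α - 1) := add_le_add e1 e2
      _ = 2 / Real.Gamma (α - 1) := by ring
  set g : ℝ → ℝ := fun r => if s < r then
      (α - 1) * (r - s) ^ (α - 2) / Real.Gamma α - K else -K with hgdef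
  -- step 1 : rewrite caputoG
  have hstep1 : caputoG α γ t s
      = (1 / Real.Gamma (1 - γ)) * ∫ r in (0:ℝ)..t, (t - r) ^ (-γ) * g r := by
    rw [caputoG, caputo]
    congr 1
    apply intervalIntegral.integral_congr_ae
    have hae : ∀ᵐ (r : ℝ), r ≠ s := compl_mem_ae_iff.mpr (measure_singleton s)
    filter_upwards [hae] with r hrs _
    rw [deriv_greenG α s hα1 r hrs]
  -- the kernel integral
  have hP : ∫ r in (0:ℝ)..t, (t - r) ^ (-γ) = t ^ (1 - γ) / (1 - γ) := by
    have h := intervalIntegral.integral_comp_sub_left (a := (0:ℝ)) (b := t)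
      (fun x => x ^ (-γ)) t
    simp only [sub_zero, sub_self] at h
    rw [h, integral_rpow (Or.inl (by linarith)),
      Real.zero_rpow (by linarith : -γ + 1 ≠ 0), show -γ + 1 = 1 - γ by ring]
    ring
  have hPnn : 0 ≤ t ^ (1 - γ) / (1 - γ) := by
    exact div_nonneg (Real.rpow_nonneg ht0 (1 - γ)) (by linarith)
  have hPle : t ^ (1 - γ) / (1 - γ) ≤ 1 / (1 - γ) := by
    have := Real.rpow_le_one ht0 ht1 (by linarith : (0:ℝ) ≤ 1 - γ)
    apply div_le_div₀ (by norm_num) this (by linarith) le_rfl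
  have hKgoal : K / Real.Gamma (2 - γ) ≤ 2 / (Real.Gamma (2 - γ) * Real.Gamma (α - 1)) := by
    have h1 : K / Real.Gamma (2 - γ) ≤ (2 / Real.Gamma (α - 1)) / Real.Gamma (2 - γ) := by
      gcongr
    calc K / Real.Gamma (2 - γ) ≤ (2 / Real.Gamma (α - 1)) / Real.Gamma (2 - γ) := h1
      _ = 2 / (Real.Gamma (2 - γ) * Real.Gamma (α - 1)) := by
          rw [div_div, mul_comm]
  by_cases hts : t ≤ s
  · -- Case A : t ≤ s
    have hIA : ∫ r in (0:ℝ)..t, (t - r) ^ (-γ) * g r = -K * (t ^ (1 - γ) / (1 - γ)) := by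
      have hEq : EqOn (fun r => (t - r) ^ (-γ) * g r) (fun r => -K * (t - r) ^ (-γ))
          (uIcc 0 t) := by
        intro r hr
        rw [uIcc_of_le ht0] at hr
        have : ¬ s < r := not_lt.mpr (le_trans hr.2 hts)
        simp only [hgdef, if_neg this]
        ring
      rw [intervalIntegral.integral_congr hEq, intervalIntegral.integral_const_mul, hP]
    rw [hstep1, hIA]
    have habs : |1 / Real.Gamma (1 - γ) * (-K * (t ^ (1 - γ) / (1 - γ)))|
        = 1 / Real.Gamma (1 - γ) * (K * (t ^ (1 - γ) / (1 - γ))) := by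
      rw [show 1 / Real.Gamma (1 - γ) * (-K * (t ^ (1 - γ) / (1 - γ)))
          = -(1 / Real.Gamma (1 - γ) * (K * (t ^ (1 - γ) / (1 - γ)))) by ring, abs_neg,
        abs_of_nonneg (by positivity)]
    rw [habs]
    have hb1 : 1 / Real.Gamma (1 - γ) * (K * (t ^ (1 - γ) / (1 - γ)))
        ≤ 1 / Real.Gamma (1 - γ) * (K * (1 / (1 - γ))) := by
      gcongr
    have hb2 : 1 / Real.Gamma (1 - γ) * (K * (1 / (1 - γ))) = K / Real.Gamma (2 - γ) := by
      rw [hG2]; field_simp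
    have hpos : 0 ≤ Real.Gamma α / Real.Gamma (α - γ) := by positivity
    linarith
  · -- Case B : s < t
    push_neg at hts
    have hc : 0 < t - s := by linarith
    -- the bounded factor
    set m : ℝ → ℝ := fun r => if s < r then (r - s) ^ (α - 2) else 0 with hmdef
    have hmcont : Continuous m := by
      have : m = fun r => (max (r - s) 0) ^ (α - 2) := by
        funext r
        by_cases h : s < r
        · rw [hmdef]
          simp only [if_pos h]
          rw [max_eq_left (by linarith)]
        · rw [hmdef]
          simp only [if_neg h]
          rw [max_eq_right (by push_neg at h; linarith),
            Real.zero_rpow (by linarith : α - 2 ≠ 0)]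
      rw [this]
      exact (Real.continuous_rpow_const (by linarith)).comp
        ((continuous_id.sub continuous_const).max continuous_const)
    have hint1 : IntervalIntegrable (fun r => (t - r) ^ (-γ)) volume 0 t := by
      have h := intervalIntegral.intervalIntegrable_rpow' (a := 0) (b := t)
        (r := -γ) (by linarith)
      have h2 := h.comp_sub_left t
      simpa using h2.symm
    have hint2 : IntervalIntegrable (fun r => (t - r) ^ (-γ) * m r) volume 0 t :=
      hint1.mul_continuousOn hmcont.continuousOn
    -- split the integral
    have hsplit : ∫ r in (0:ℝ)..t, (t - r) ^ (-γ) * g r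
        = (α - 1) / Real.Gamma α * (∫ r in (0:ℝ)..t, (t - r) ^ (-γ) * m r)
          - K * ∫ r in (0:ℝ)..t, (t - r) ^ (-γ) := by
      rw [← intervalIntegral.integral_const_mul, ← intervalIntegral.integral_const_mul,
        ← intervalIntegral.integral_sub (hint2.const_mul _) (hint1.const_mul _)]
      apply intervalIntegral.integral_congr
      intro r _
      simp only [hgdef, hmdef]
      split_ifs <;> ring
    -- evaluate Q
    have hQ1 : ∫ r in (0:ℝ)..t, (t - r) ^ (-γ) * m r
        = ∫ r in s..t, (t - r) ^ (-γ) * (r - s) ^ (α - 2) := by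
      have hi1 : IntervalIntegrable (fun r => (t - r) ^ (-γ) * m r) volume 0 s :=
        hint2.mono_set (by rw [uIcc_of_le hs0, uIcc_of_le ht0]; exact Icc_subset_Icc le_rfl hts.le)
      have hi2 : IntervalIntegrable (fun r => (t - r) ^ (-γ) * m r) volume s t :=
        hint2.mono_set (by rw [uIcc_of_le hts.le, uIcc_of_le ht0]; exact Icc_subset_Icc hs0 le_rfl)
      rw [← intervalIntegral.integral_add_adjacent_intervals hi1 hi2]
      have hz : ∫ r in (0:ℝ)..s, (t - r) ^ (-γ) * m r = 0 := by
        have hEq : EqOn (fun r => (t - r) ^ (-γ) * m r) (fun _ => (0:ℝ)) (uIcc 0 s) := by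
          intro r hr
          rw [uIcc_of_le hs0] at hr
          simp only [hmdef, if_neg (not_lt.mpr hr.2), mul_zero]
        rw [intervalIntegral.integral_congr hEq]
        simp
      have hco : ∫ r in s..t, (t - r) ^ (-γ) * m r
          = ∫ r in s..t, (t - r) ^ (-γ) * (r - s) ^ (α - 2) := by
        apply intervalIntegral.integral_congr
        intro r hr
        rw [uIcc_of_le hts.le] at hr
        rcases eq_or_lt_of_le hr.1 with h | h
        · rw [← h]
          simp [hmdef, Real.zero_rpow (show α - 2 ≠ 0 by linarith)]
        · simp only [hmdef, if_pos h]
      rw [hz, zero_add, hco]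
    have hQ2 : ∫ r in s..t, (t - r) ^ (-γ) * (r - s) ^ (α - 2)
        = ∫ x in (0:ℝ)..(t - s), (t - s - x) ^ (-γ) * x ^ (α - 2) := by
      have h := intervalIntegral.integral_comp_add_right (a := (0:ℝ)) (b := t - s)
        (fun r => (t - r) ^ (-γ) * (r - s) ^ (α - 2)) s
      simp only [zero_add, sub_add_cancel] at h
      rw [← h]
      apply intervalIntegral.integral_congr
      intro x _
      beta_reduce
      rw [show t - (x + s) = t - s - x by ring, show x + s - s = x by ring]
    have hQ3 : ∫ x in (0:ℝ)..(t - s), (t - s - x) ^ (-γ) * x ^ (α - 2)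
        = (t - s) * ∫ y in (0:ℝ)..1, (t - s - (t - s) * y) ^ (-γ) * ((t - s) * y) ^ (α - 2) := by
      have h := intervalIntegral.integral_comp_mul_left (a := (0:ℝ)) (b := 1)
        (fun x => (t - s - x) ^ (-γ) * x ^ (α - 2)) hc.ne'
      simp only [mul_zero, mul_one, smul_eq_mul] at h
      rw [h, ← mul_assoc, mul_inv_cancel₀ hc.ne', one_mul]
    have hQ4 : ∫ y in (0:ℝ)..1, (t - s - (t - s) * y) ^ (-γ) * ((t - s) * y) ^ (α - 2)
        = ((t - s) ^ (-γ) * (t - s) ^ (α - 2))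
          * ∫ y in (0:ℝ)..1, y ^ (α - 2) * (1 - y) ^ (-γ) := by
      rw [← intervalIntegral.integral_const_mul]
      apply intervalIntegral.integral_congr
      intro y hy
      rw [uIcc_of_le (by norm_num : (0:ℝ) ≤ 1)] at hy
      beta_reduce
      rw [show t - s - (t - s) * y = (t - s) * (1 - y) by ring,
        Real.mul_rpow hc.le (by linarith [hy.2]), Real.mul_rpow hc.le hy.1]
      ring
    have hbeta : ∫ y in (0:ℝ)..1, y ^ (α - 2) * (1 - y) ^ (-γ)
        = Real.Gamma (α - 1) * Real.Gamma (1 - γ) / Real.Gamma (α - γ) := by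
      have h := real_beta (α - 1) (1 - γ) (by linarith) (by linarith)
      rw [show α - 1 - 1 = α - 2 by ring, show 1 - γ - 1 = -γ by ring,
        show α - 1 + (1 - γ) = α - γ by ring] at h
      exact h
    have hpowfac : (t - s) * ((t - s) ^ (-γ) * (t - s) ^ (α - 2)) = (t - s) ^ (α - 1 - γ) := by
      rw [show α - 1 - γ = 1 + -γ + (α - 2) by ring, Real.rpow_add hc, Real.rpow_add hc,
        Real.rpow_one]
      ring
    have hfac1 : (t - s) ^ (α - 1 - γ) ≤ 1 :=
      Real.rpow_le_one hc.le (by linarith) (by linarith)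
    have hfacnn : 0 ≤ (t - s) ^ (α - 1 - γ) := Real.rpow_nonneg hc.le _
    have hBnn : 0 ≤ Real.Gamma (α - 1) * Real.Gamma (1 - γ) / Real.Gamma (α - γ) := by
      positivity
    have hQval : ∫ r in (0:ℝ)..t, (t - r) ^ (-γ) * m r
        = (t - s) ^ (α - 1 - γ) * (Real.Gamma (α - 1) * Real.Gamma (1 - γ) / Real.Gamma (α - γ)) := by
      rw [hQ1, hQ2, hQ3, hQ4, hbeta, ← mul_assoc, hpowfac]
    have hQnn : 0 ≤ ∫ r in (0:ℝ)..t, (t - r) ^ (-γ) * m r := by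
      rw [hQval]; exact mul_nonneg hfacnn hBnn
    have hQle : ∫ r in (0:ℝ)..t, (t - r) ^ (-γ) * m r
        ≤ Real.Gamma (α - 1) * Real.Gamma (1 - γ) / Real.Gamma (α - γ) := by
      rw [hQval]
      exact mul_le_of_le_one_left hBnn hfac1
    -- assemble
    rw [hstep1, hsplit, hP]
    set Q := ∫ r in (0:ℝ)..t, (t - r) ^ (-γ) * m r
    clear_value Q
    clear hmcont hint1 hint2 hQ1 hQ2 hQ3 hQ4
    clear_value K m g
    have hA : 0 ≤ (α - 1) / Real.Gamma α * Q :=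
      mul_nonneg (div_nonneg (by linarith) hΓα.le) hQnn
    have hB' : 0 ≤ K * (t ^ (1 - γ) / (1 - γ)) := by positivity
    have habs : |1 / Real.Gamma (1 - γ) * ((α - 1) / Real.Gamma α * Q
          - K * (t ^ (1 - γ) / (1 - γ)))|
        ≤ 1 / Real.Gamma (1 - γ) * ((α - 1) / Real.Gamma α * Q)
          + 1 / Real.Gamma (1 - γ) * (K * (t ^ (1 - γ) / (1 - γ))) := by
      rw [mul_sub, abs_sub_comm]
      refine le_trans (abs_sub ((1 / Real.Gamma (1 - γ)) * (K * (t ^ (1 - γ) / (1 - γ))))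
        ((1 / Real.Gamma (1 - γ)) * ((α - 1) / Real.Gamma α * Q))) ?_
      rw [abs_of_nonneg (mul_nonneg (by positivity : (0:ℝ) ≤ 1 / Real.Gamma (1 - γ)) hB'),
        abs_of_nonneg (mul_nonneg (by positivity : (0:ℝ) ≤ 1 / Real.Gamma (1 - γ)) hA)]
      linarith
    refine le_trans habs ?_
    have ht1' : 1 / Real.Gamma (1 - γ) * ((α - 1) / Real.Gamma α * Q)
        ≤ Real.Gamma α / Real.Gamma (α - γ) := by
      have step : 1 / Real.Gamma (1 - γ) * ((α - 1) / Real.Gamma α * Q)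
          ≤ 1 / Real.Gamma (1 - γ) * ((α - 1) / Real.Gamma α
            * (Real.Gamma (α - 1) * Real.Gamma (1 - γ) / Real.Gamma (α - γ))) := by
        apply mul_le_mul_of_nonneg_left _ (by positivity : (0:ℝ) ≤ 1 / Real.Gamma (1 - γ))
        exact mul_le_mul_of_nonneg_left hQle (div_nonneg (by linarith) hΓα.le)
      refine le_trans step ?_
      have heq : 1 / Real.Gamma (1 - γ) * ((α - 1) / Real.Gamma α
            * (Real.Gamma (α - 1) * Real.Gamma (1 - γ) / Real.Gamma (α - γ)))
          = 1 / Real.Gamma (α - γ) := by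
        have hne : α - 1 ≠ 0 := by linarith
        rw [hGα]
        field_simp
      rw [heq]
      gcongr
    have ht2' : 1 / Real.Gamma (1 - γ) * (K * (t ^ (1 - γ) / (1 - γ)))
        ≤ 2 / (Real.Gamma (2 - γ) * Real.Gamma (α - 1)) := by
      have hb1 : 1 / Real.Gamma (1 - γ) * (K * (t ^ (1 - γ) / (1 - γ)))
          ≤ 1 / Real.Gamma (1 - γ) * (K * (1 / (1 - γ))) := by gcongr
      have hb2 : 1 / Real.Gamma (1 - γ) * (K * (1 / (1 - γ))) = K / Real.Gamma (2 - γ) := by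
        rw [hG2]; field_simp
      linarith
    linarith
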